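/- Let Ω ⊆ ℝ be a measurable set, N₀ > 0, and let H_SD, H_SR, H_RD : Ω → ℂ be measurable with H_SD(f) ≠ 0 and H_RD(f)·H_SR(f) ≠ 0 for every f ∈ Ω. For measurable functions P : Ω → [0,∞) and Ξ : Ω → ℂ, define the per-frequency rate R(P,Ξ)(f) = (1/2)·log₂(1 + |H_SD(f) + H_RD(f)H_SR(f)Ξ(f)|²·P(f) / ((|H_RD(f)Ξ(f)|² + 1)·N₀)). Define the phase-aligned function Ξ'(f) := |Ξ(f)| · (H_SD(f)·conj(H_RD(f)H_SR(f))) / |H_SD(f)·conj(H_RD(f)H_SR(f))|. Then Ξ' is measurable, |Ξ'(f)| = |Ξ(f)| for all f (so that ∫_Ω |Ξ'(f)|²(|H_SR(f)|²P(f) + N₀) df = ∫_Ω |Ξ(f)|²(|H_SR(f)|²P(f) + N₀) df), R(P,Ξ')(f) ≥ R(P,Ξ)(f) for every f ∈ Ω, and consequently ∫_Ω R(P,Ξ')(f) df ≥ ∫_Ω R(P,Ξ)(f) df. -/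

import Mathlib

open MeasureTheory

/-- The per-frequency achievable rate `R(P,Ξ)(f)` of equation (10)/(13). -/
noncomputable def ffRate (N₀ : ℝ) (HSD HSR HRD : ℝ → ℂ) (P : ℝ → ℝ) (Ξ : ℝ → ℂ)
    (f : ℝ) : ℝ :=
  (1 / 2) * Real.logb 2 (1 +
    (‖HSD f + HRD f * HSR f * Ξ f‖) ^ 2 * P f /
      (((‖HRD f * Ξ f‖) ^ 2 + 1) * N₀))

/-- Reduction from problem (13) to problem (15): replacing a candidate effective
relay gain `Ξ` by its phase-aligned version `Ξ'` preserves measurability and the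
per-frequency modulus (hence the relay power integral) while not decreasing the
rate integrand at any frequency of `Ω`, and therefore not decreasing the integrated
rate over `Ω`. -/
theorem phase_alignment_improves_rate
    (Ω : Set ℝ) (hΩ : MeasurableSet Ω) (N₀ : ℝ) (hN₀ : 0 < N₀)
    (HSD HSR HRD : ℝ → ℂ)
    (hSDm : Measurable HSD) (hSRm : Measurable HSR) (hRDm : Measurable HRD)
    (hSD0 : ∀ f ∈ Ω, HSD f ≠ 0) (hRDSR0 : ∀ f ∈ Ω, HRD f * HSR f ≠ 0)
    (P : ℝ → ℝ) (hPm : Measurable P) (hP0 : ∀ f, 0 ≤ P f)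
    (Ξ : ℝ → ℂ) (hΞm : Measurable Ξ) :
    let Ξ' : ℝ → ℂ := fun f =>
      (‖Ξ f‖ : ℂ) * (HSD f * (starRingEnd ℂ) (HRD f * HSR f))
        / (‖HSD f * (starRingEnd ℂ) (HRD f * HSR f)‖ : ℂ)
    Measurable Ξ' ∧
    (∀ f ∈ Ω, ‖Ξ' f‖ = ‖Ξ f‖) ∧
    (∫⁻ f in Ω, ENNReal.ofReal
        ((‖Ξ' f‖) ^ 2 * ((‖HSR f‖) ^ 2 * P f + N₀))
      = ∫⁻ f in Ω, ENNReal.ofReal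
        ((‖Ξ f‖) ^ 2 * ((‖HSR f‖) ^ 2 * P f + N₀))) ∧
    (∀ f ∈ Ω, ffRate N₀ HSD HSR HRD P Ξ f ≤ ffRate N₀ HSD HSR HRD P Ξ' f) ∧
    (∫⁻ f in Ω, ENNReal.ofReal (ffRate N₀ HSD HSR HRD P Ξ f)
      ≤ ∫⁻ f in Ω, ENNReal.ofReal (ffRate N₀ HSD HSR HRD P Ξ' f)) := by
  intro Ξ'
  have hΞ'm : Measurable Ξ' := by
    apply Measurable.div
    · exact ((Complex.measurable_ofReal.comp (continuous_norm.measurable.comp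
        hΞm))).mul (hSDm.mul ((Complex.continuous_conj.measurable).comp (hRDm.mul hSRm)))
    · exact Complex.measurable_ofReal.comp (continuous_norm.measurable.comp
        (hSDm.mul ((Complex.continuous_conj.measurable).comp (hRDm.mul hSRm))))
  have habs : ∀ f ∈ Ω, ‖Ξ' f‖ = ‖Ξ f‖ := by
    intro f hf
    have ha : HSD f * (starRingEnd ℂ) (HRD f * HSR f) ≠ 0 :=
      mul_ne_zero (hSD0 f hf) (by simpa using hRDSR0 f hf)
    have ha' : ‖HSD f * (starRingEnd ℂ) (HRD f * HSR f)‖ ≠ 0 := by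
      simpa using ha
    show ‖(‖Ξ f‖ : ℂ) * (HSD f * (starRingEnd ℂ) (HRD f * HSR f))
        / (‖HSD f * (starRingEnd ℂ) (HRD f * HSR f)‖ : ℂ)‖ = _
    rw [norm_div, norm_mul, Complex.norm_real, Complex.norm_real, Real.norm_eq_abs, Real.norm_eq_abs,
      abs_of_nonneg (norm_nonneg _), abs_of_nonneg (norm_nonneg _),
      mul_div_assoc, div_self ha', mul_one]
  have hrate : ∀ f ∈ Ω, ffRate N₀ HSD HSR HRD P Ξ f ≤ ffRate N₀ HSD HSR HRD P Ξ' f := by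
    intro f hf
    set a := HRD f * HSR f with ha_def
    set d := HSD f with hd_def
    have ha : a ≠ 0 := hRDSR0 f hf
    have hd : d ≠ 0 := hSD0 f hf
    have h1 : ‖a‖ ≠ 0 := by simpa using ha
    have h2 : ‖d‖ ≠ 0 := by simpa using hd
    have h1' : (0:ℝ) < ‖a‖ := (norm_pos_iff.mpr ha)
    have h2' : (0:ℝ) < ‖d‖ := (norm_pos_iff.mpr hd)
    have hca : ((‖a‖ : ℝ) : ℂ) ≠ 0 := Complex.ofReal_ne_zero.mpr h1
    have hcd : ((‖d‖ : ℝ) : ℂ) ≠ 0 := Complex.ofReal_ne_zero.mpr h2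
    have habsmul : ‖d * (starRingEnd ℂ) a‖ = ‖d‖ * ‖a‖ := by
      simp [map_mul]
    have hmc : a * (starRingEnd ℂ) a = ((‖a‖ : ℝ) : ℂ) ^ 2 := by
      rw [Complex.mul_conj]
      norm_cast
      exact (Complex.sq_norm a).symm
    have hkey : a * Ξ' f =
        ((‖Ξ f‖ * ‖a‖ / ‖d‖ : ℝ) : ℂ) * d := by
      show a * ((‖Ξ f‖ : ℂ) * (d * (starRingEnd ℂ) a)
          / (‖d * (starRingEnd ℂ) a‖ : ℂ)) = _
      rw [habsmul]
      push_cast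
      have hinv : ((‖a‖ : ℝ) : ℂ) * ((‖a‖ : ℝ) : ℂ)⁻¹ = 1 := mul_inv_cancel₀ hca
      linear_combination ((‖Ξ f‖ : ℂ) * d * ((‖d‖ : ℝ) : ℂ)⁻¹ * ((‖a‖ : ℝ) : ℂ)⁻¹) * hmc
        + ((‖Ξ f‖ : ℂ) * d * ((‖d‖ : ℝ) : ℂ)⁻¹ * ((‖a‖ : ℝ) : ℂ)) * hinv
    have hA' : ‖d + a * Ξ' f‖
        = ‖d‖ + ‖a‖ * ‖Ξ f‖ := by
      rw [hkey]
      have h3 : d + ((‖Ξ f‖ * ‖a‖ / ‖d‖ : ℝ) : ℂ) * d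
          = (((1 + ‖Ξ f‖ * ‖a‖ / ‖d‖) : ℝ) : ℂ) * d := by
        push_cast; ring
      rw [h3, norm_mul, Complex.norm_real, Real.norm_eq_abs,
        abs_of_nonneg (by positivity)]
      field_simp
    have hA : ‖d + a * Ξ f‖
        ≤ ‖d‖ + ‖a‖ * ‖Ξ f‖ := by
      calc ‖d + a * Ξ f‖ ≤ ‖d‖ + ‖a * Ξ f‖ :=
            norm_add_le _ _
        _ = _ := by rw [norm_mul]
    have hAle : ‖d + a * Ξ f‖ ≤ ‖d + a * Ξ' f‖ := by
      rw [hA']; exact hA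
    have hDeq : ‖HRD f * Ξ' f‖ = ‖HRD f * Ξ f‖ := by
      rw [norm_mul, norm_mul, habs f hf]
    unfold ffRate
    rw [hDeq]
    have hPf : 0 ≤ P f := hP0 f
    apply mul_le_mul_of_nonneg_left _ (by norm_num : (0:ℝ) ≤ 1/2)
    apply Real.logb_le_logb_of_le (by norm_num : (1:ℝ) < 2)
    · positivity
    · gcongr <;> first | exact norm_nonneg _ | exact hPf | exact hAle
  refine ⟨hΞ'm, habs, ?_, hrate, ?_⟩
  · apply lintegral_congr_ae
    filter_upwards [ae_restrict_mem hΩ] with f hf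
    rw [habs f hf]
  · apply lintegral_mono_ae
    filter_upwards [ae_restrict_mem hΩ] with f hf
    exact ENNReal.ofReal_le_ofReal (hrate f hf)
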